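/- For the amplitude damping Kraus family at ω = 0 with 0 < p < 1 — K₁ = diag(1, √(1−p)), K₂ = √p·E₀₁, with derivative family K̇₁ = diag(−i/2, (i/2)√(1−p)), K̇₂ = (i/2)√p·E₀₁, where E₀₁ is the matrix unit with 1 in row 0, column 1 — the following hold: (a) for a 2×2 Hermitian matrix h, β(h) = 0 if and only if h = diag(−1/2, (2−p)/(2p)); (b) for that unique h, α(h) = ((1−p)/p)·E₁₁ where E₁₁ = diag(0,1); (c) consequently the minimum over Hermitian h with β(h) = 0 of 4‖α(h)‖ equals 4(1−p)/p. -/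

import Mathlib

open Matrix

/-- The ℓ²→ℓ² operator norm (largest singular value) of a complex matrix. -/
noncomputable def opNorm {m n : Type*} [Fintype m] [Fintype n] [DecidableEq n]
    (A : Matrix m n ℂ) : ℝ :=
  ‖LinearMap.toContinuousLinearMap (Matrix.toEuclideanLin A)‖

/-- `α(h) = ∑_i (K̇_i − i ∑_j h_{ij} K_j)† (K̇_i − i ∑_j h_{ij} K_j)`. -/
noncomputable def krausAlpha {d d' r : ℕ} (K Kd : Fin r → Matrix (Fin d') (Fin d) ℂ)
    (h : Matrix (Fin r) (Fin r) ℂ) : Matrix (Fin d) (Fin d) ℂ :=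
  ∑ i, (Kd i - Complex.I • ∑ j, h i j • K j)ᴴ * (Kd i - Complex.I • ∑ j, h i j • K j)

/-- `β(h) = H + ∑_{i,j} h_{ij} K_i† K_j` where `H = i ∑_i K_i† K̇_i`. -/
noncomputable def krausBeta {d d' r : ℕ} (K Kd : Fin r → Matrix (Fin d') (Fin d) ℂ)
    (h : Matrix (Fin r) (Fin r) ℂ) : Matrix (Fin d) (Fin d) ℂ :=
  (Complex.I • ∑ i, (K i)ᴴ * Kd i) + ∑ i, ∑ j, h i j • ((K i)ᴴ * K j)

/-- Amplitude damping Kraus family at `ω = 0`: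
`K₁ = diag(1, √(1−p))`, `K₂ = √p·E₀₁`. -/
noncomputable def adK (p : ℝ) : Fin 2 → Matrix (Fin 2) (Fin 2) ℂ :=
  ![!![1, 0; 0, (Real.sqrt (1 - p) : ℂ)],
    (Real.sqrt p : ℂ) • !![0, 1; 0, 0]]

/-- Derivative family at `ω = 0`:
`K̇₁ = diag(−i/2, (i/2)√(1−p))`, `K̇₂ = (i/2)√p·E₀₁`. -/
noncomputable def adKdot (p : ℝ) : Fin 2 → Matrix (Fin 2) (Fin 2) ℂ :=
  ![!![-(Complex.I / 2), 0; 0, (Complex.I / 2) * (Real.sqrt (1 - p) : ℂ)],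
    ((Complex.I / 2) * (Real.sqrt p : ℂ)) • !![0, 1; 0, 0]]

set_option linter.unnecessarySeqFocus false

lemma opNorm_smul_E11 (c : ℝ) (hc : 0 ≤ c) :
    opNorm ((c : ℂ) • !![0, 0; 0, 1]) = c := by
  set M : Matrix (Fin 2) (Fin 2) ℂ := (c : ℂ) • !![0, 0; 0, 1] with hM
  have key : ∀ x : EuclideanSpace ℂ (Fin 2),
      ‖(LinearMap.toContinuousLinearMap (Matrix.toEuclideanLin M)) x‖ = c * ‖x 1‖ := by
    intro x
    have : (LinearMap.toContinuousLinearMap (Matrix.toEuclideanLin M)) x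
        = (WithLp.equiv 2 (Fin 2 → ℂ)).symm (M *ᵥ (WithLp.equiv 2 (Fin 2 → ℂ)) x) := rfl
    rw [this, EuclideanSpace.norm_eq]
    have h0 : (M *ᵥ (WithLp.equiv 2 (Fin 2 → ℂ)) x) 0 = 0 := by
      simp [hM, Matrix.mulVec, dotProduct, Fin.sum_univ_two]
    have h1 : (M *ᵥ (WithLp.equiv 2 (Fin 2 → ℂ)) x) 1 = (c : ℂ) * x 1 := by
      simp [hM, Matrix.mulVec, dotProduct, Fin.sum_univ_two]
    simp only [Fin.sum_univ_two]
    rw [show ((WithLp.equiv 2 (Fin 2 → ℂ)).symm (M *ᵥ (WithLp.equiv 2 (Fin 2 → ℂ)) x)) 0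
        = (M *ᵥ (WithLp.equiv 2 (Fin 2 → ℂ)) x) 0 from rfl,
      show ((WithLp.equiv 2 (Fin 2 → ℂ)).symm (M *ᵥ (WithLp.equiv 2 (Fin 2 → ℂ)) x)) 1
        = (M *ᵥ (WithLp.equiv 2 (Fin 2 → ℂ)) x) 1 from rfl, h0, h1]
    rw [norm_mul, Complex.norm_real, Real.norm_of_nonneg hc]
    rw [norm_zero, show (0:ℝ)^2 + (c * ‖x 1‖)^2 = (c * ‖x 1‖)^2 by ring,
      Real.sqrt_sq (by positivity)]
  apply le_antisymm
  · apply ContinuousLinearMap.opNorm_le_bound _ hc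
    intro x
    rw [key x]
    gcongr
    have : ‖x 1‖ ^ 2 ≤ ‖x‖ ^ 2 := by
      rw [EuclideanSpace.norm_eq, Real.sq_sqrt (by positivity), Fin.sum_univ_two]
      nlinarith [norm_nonneg (x 0), norm_nonneg (x 1)]
    nlinarith [norm_nonneg (x 1), norm_nonneg x]
  · have hx : ‖(EuclideanSpace.single (1 : Fin 2) (1 : ℂ) : EuclideanSpace ℂ (Fin 2))‖ = 1 := by
      simp [EuclideanSpace.norm_single]
    have := (LinearMap.toContinuousLinearMap (Matrix.toEuclideanLin M)).le_opNorm
      (EuclideanSpace.single (1 : Fin 2) (1 : ℂ))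
    rw [key, hx, mul_one] at this
    simpa [opNorm] using this

set_option maxHeartbeats 1600000 in
/-- For the amplitude damping channel with `0 < p < 1`:
(a) a Hermitian `h` satisfies `β(h) = 0` iff `h = diag(−1/2, (2−p)/(2p))`;
(b) for this `h`, `α(h) = ((1−p)/p)·diag(0,1)`;
(c) the minimum of `4‖α(h)‖` over Hermitian `h` with `β(h) = 0` is `4(1−p)/p`. -/
theorem amplitude_damping_SQL (p : ℝ) (hp0 : 0 < p) (hp1 : p < 1) :
    (∀ h : Matrix (Fin 2) (Fin 2) ℂ, h.IsHermitian →
      (krausBeta (adK p) (adKdot p) h = 0 ↔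
        h = !![(-(1 / 2) : ℂ), 0; 0, (((2 - p) / (2 * p) : ℝ) : ℂ)]))
    ∧ krausAlpha (adK p) (adKdot p)
        !![(-(1 / 2) : ℂ), 0; 0, (((2 - p) / (2 * p) : ℝ) : ℂ)]
      = (((1 - p) / p : ℝ) : ℂ) • !![0, 0; 0, 1]
    ∧ IsLeast {x : ℝ | ∃ h : Matrix (Fin 2) (Fin 2) ℂ, h.IsHermitian ∧
          krausBeta (adK p) (adKdot p) h = 0 ∧
          x = 4 * opNorm (krausAlpha (adK p) (adKdot p) h)}
        (4 * (1 - p) / p) := by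
  have hpne : (p : ℂ) ≠ 0 := by exact_mod_cast hp0.ne'
  have hsq : Real.sqrt p ^ 2 = p := Real.sq_sqrt hp0.le
  have htq : Real.sqrt (1-p) ^ 2 = 1 - p := Real.sq_sqrt (by linarith)
  have hsC : (Real.sqrt p : ℂ) * (Real.sqrt p : ℂ) = (p : ℂ) := by
    rw [← Complex.ofReal_mul, Real.mul_self_sqrt hp0.le]
  have htC : (Real.sqrt (1-p) : ℂ) * (Real.sqrt (1-p) : ℂ) = 1 - (p : ℂ) := by
    rw [← Complex.ofReal_mul, Real.mul_self_sqrt (by linarith)]; push_cast; ring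
  -- part (a), without needing hermiticity
  have parta : ∀ h : Matrix (Fin 2) (Fin 2) ℂ,
      (krausBeta (adK p) (adKdot p) h = 0 ↔
        h = !![(-(1 / 2) : ℂ), 0; 0, (((2 - p) / (2 * p) : ℝ) : ℂ)]) := by
    intro h
    constructor
    · intro hb
      have e00 := congrFun (congrFun hb 0) 0
      have e01 := congrFun (congrFun hb 0) 1
      have e10 := congrFun (congrFun hb 1) 0
      have e11 := congrFun (congrFun hb 1) 1
      simp [krausBeta, adK, adKdot, Fin.sum_univ_two, Matrix.mul_apply, Matrix.add_apply,
        Matrix.smul_apply, Matrix.conjTranspose_apply] at e00 e01 e10 e11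
      have e00' : h 0 0 = -(1/2 : ℂ) := by
        linear_combination e00 + (1/2 : ℂ) * Complex.I_sq
      ext i j
      fin_cases i <;> fin_cases j <;> simp
      · linear_combination e00 + (1/2 : ℂ) * Complex.I_sq
      · exact e01.resolve_right (Real.sqrt_ne_zero'.2 hp0)
      · exact e10.resolve_right (Real.sqrt_ne_zero'.2 hp0)
      · rw [e00'] at e11
        field_simp
        linear_combination (2:ℂ) * e11 + (-2 * h 1 1 - Complex.I^2) * hsC + 2 * htC
          + (-((Real.sqrt (1-p) : ℂ))^2 - (p:ℂ)) * Complex.I_sq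
    · intro hb
      subst hb
      ext i j
      fin_cases i <;> fin_cases j <;>
        simp [krausBeta, adK, adKdot, Fin.sum_univ_two, Matrix.mul_apply, Matrix.add_apply,
          Matrix.smul_apply, Matrix.conjTranspose_apply, Complex.ext_iff] <;>
        field_simp <;> ring_nf <;>
        simp [Complex.ext_iff, hsq, htq] <;> ring_nf <;> field_simp <;> ring
  -- part (b)
  have partb : krausAlpha (adK p) (adKdot p)
        !![(-(1 / 2) : ℂ), 0; 0, (((2 - p) / (2 * p) : ℝ) : ℂ)]
      = (((1 - p) / p : ℝ) : ℂ) • !![0, 0; 0, 1] := by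
    ext i j
    fin_cases i <;> fin_cases j <;>
      simp [krausAlpha, adK, adKdot, Fin.sum_univ_two, Matrix.mul_apply, Matrix.sub_apply,
        Matrix.smul_apply, Matrix.conjTranspose_apply, Complex.ext_iff] <;>
      field_simp <;> ring_nf <;>
      simp [Complex.ext_iff, hsq, htq] <;> ring_nf <;> field_simp <;> ring
  have hherm : (!![(-(1 / 2) : ℂ), 0; 0, (((2 - p) / (2 * p) : ℝ) : ℂ)]).IsHermitian := by
    unfold Matrix.IsHermitian
    ext i j
    fin_cases i <;> fin_cases j <;>
      simp [Matrix.conjTranspose_apply, Complex.ext_iff]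
  have hval : 4 * opNorm (krausAlpha (adK p) (adKdot p)
      !![(-(1 / 2) : ℂ), 0; 0, (((2 - p) / (2 * p) : ℝ) : ℂ)]) = 4 * (1 - p) / p := by
    rw [partb, opNorm_smul_E11 _ (div_nonneg (by linarith) hp0.le)]
    field_simp
  refine ⟨fun h _ => parta h, partb, ⟨?_, ?_⟩⟩
  · exact ⟨_, hherm, (parta _).2 rfl, hval.symm⟩
  · rintro x ⟨h, hh, hb, rfl⟩
    rw [(parta h).1 hb, hval]
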